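/- arXiv:1605.01719 — 2 statements merged into one kernel-verified Lean document; each statement's English description precedes it below -/
import Mathlib

section
/- Let F : [0,∞) → [0,∞) be continuously differentiable with (1 + F(t)²)^{-1} F'(t) ≤ C F(t) for all t, ∫₀^∞ F(t) dt < ∞, and suppose there is a sequence t_j → ∞ with F(t_j) → 0. Then F(t) → 0 as t → ∞. -/
open Set Filter MeasureTheory

theorem stmt_3 (F : ℝ → ℝ) (C : ℝ) (hC : 0 < C)
    (hreg : ContDiffOn ℝ 1 F (Ici 0))
    (hnonneg : ∀ t ∈ Ici (0 : ℝ), 0 ≤ F t)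
    (hint : IntegrableOn F (Ici 0))
    (hderiv : ∀ t ∈ Ici (0 : ℝ), (1 + F t ^ 2)⁻¹ * derivWithin F (Ici 0) t ≤ C * F t)
    (tj : ℕ → ℝ) (htj : Tendsto tj atTop atTop)
    (hFtj : Tendsto (fun j => F (tj j)) atTop (nhds 0)) :
    Tendsto F atTop (nhds 0) := by
  have hFcont : ContinuousOn F (Ici 0) := hreg.continuousOn
  have hFdiff : DifferentiableOn ℝ F (Ici 0) := hreg.differentiableOn one_ne_zero
  -- continuity at interior points
  have hca : ∀ x : ℝ, 0 < x → ContinuousAt F x := fun x hx =>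
    (hFcont x (le_of_lt hx)).continuousAt (Ici_mem_nhds hx)
  -- key inequality: for 0 ≤ s ≤ t, arctan (F t) ≤ arctan (F s) + C * ∫ u in s..t, F u
  have key : ∀ s t : ℝ, 0 ≤ s → s ≤ t →
      Real.arctan (F t) ≤ Real.arctan (F s) + C * ∫ u in s..t, F u := by
    intro s t hs hst
    set H : ℝ → ℝ := fun x => C * (∫ u in s..x, F u) - Real.arctan (F x) with hH
    have hIccsub : Icc s t ⊆ Ici 0 := fun x hx => le_trans hs hx.1
    have hcont : ContinuousOn H (Icc s t) := by
      apply ContinuousOn.sub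
      · apply ContinuousOn.mul continuousOn_const
        have := intervalIntegral.continuousOn_primitive_interval
          (μ := volume) (f := F) (a := s) (b := t) (hint.mono_set ?_)
        · rwa [uIcc_of_le hst] at this
        · rw [uIcc_of_le hst]; exact hIccsub
      · exact Real.continuous_arctan.comp_continuousOn (hFcont.mono hIccsub)
    have hderivH : ∀ x ∈ Ioo s t,
        HasDerivAt H (C * F x - (1 + F x ^ 2)⁻¹ * deriv F x) x := by
      intro x hx
      have hx0 : 0 < x := lt_of_le_of_lt hs hx.1
      have hFd : DifferentiableAt ℝ F x :=
        (hFdiff x (le_of_lt hx0)).differentiableAt (Ici_mem_nhds hx0)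
      have hI : HasDerivAt (fun y => ∫ u in s..y, F u) (F x) x := by
        apply intervalIntegral.integral_hasDerivAt_right
        · apply (hint.mono_set ?_).intervalIntegrable
          rw [uIcc_of_le (le_of_lt hx.1)]
          exact fun y hy => le_trans hs hy.1
        · exact ContinuousAt.stronglyMeasurableAtFilter isOpen_Ioi
            (fun y hy => hca y hy) x hx0
        · exact hca x hx0
      have harc : HasDerivAt (fun y => Real.arctan (F y))
          ((1 / (1 + F x ^ 2)) * deriv F x) x :=
        (Real.hasDerivAt_arctan (F x)).comp x hFd.hasDerivAt
      have := (hI.const_mul C).sub harc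
      rw [one_div] at this
      exact this
    have hmono : MonotoneOn H (Icc s t) := by
      apply monotoneOn_of_deriv_nonneg (convex_Icc s t) hcont
      · intro x hx
        rw [interior_Icc] at hx
        exact (hderivH x hx).differentiableAt.differentiableWithinAt
      · intro x hx
        rw [interior_Icc] at hx
        rw [(hderivH x hx).deriv]
        have hx0 : 0 < x := lt_of_le_of_lt hs hx.1
        have hdw : derivWithin F (Ici 0) x = deriv F x :=
          derivWithin_of_mem_nhds (Ici_mem_nhds hx0)
        have := hderiv x (le_of_lt hx0)
        rw [hdw] at this
        linarith
    have := hmono (left_mem_Icc.mpr hst) (right_mem_Icc.mpr hst) hst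
    simp only [hH, intervalIntegral.integral_same, mul_zero, zero_sub] at this
    linarith
  -- arctan (F t) tends to 0
  have harc0 : Tendsto (fun t => Real.arctan (F t)) atTop (nhds 0) := by
    set L := ∫ x in Ioi (0 : ℝ), F x with hL
    set I : ℝ → ℝ := fun x => ∫ u in (0 : ℝ)..x, F u with hI
    have hintIoi : IntegrableOn F (Ioi 0) := hint.mono_set Ioi_subset_Ici_self
    have hIL : Tendsto I atTop (nhds L) :=
      intervalIntegral_tendsto_integral_Ioi 0 hintIoi tendsto_id
    have hILj : Tendsto (fun j => I (tj j)) atTop (nhds L) := hIL.comp htj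
    have harcj : Tendsto (fun j => Real.arctan (F (tj j))) atTop (nhds 0) := by
      have := (Real.continuous_arctan.continuousAt (x := 0)).tendsto.comp hFtj
      simpa [Real.arctan_zero, Function.comp_def] using this
    have hIle : ∀ t : ℝ, 0 ≤ t → I t ≤ L := by
      intro t ht
      show (∫ u in (0:ℝ)..t, F u) ≤ ∫ x in Ioi (0:ℝ), F x
      rw [intervalIntegral.integral_of_le ht]
      apply setIntegral_mono_set hintIoi
      · filter_upwards [ae_restrict_mem measurableSet_Ioi] with x hx
        exact hnonneg x (mem_Ici.mpr (le_of_lt (mem_Ioi.mp hx)))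
      · exact HasSubset.Subset.eventuallyLE Ioc_subset_Ioi_self
    rw [Metric.tendsto_atTop]
    intro ε hε
    -- choose j
    have h1 : ∀ᶠ j in atTop, Real.arctan (F (tj j)) < ε / 2 :=
      harcj.eventually (eventually_lt_nhds (by linarith : (0:ℝ) < ε / 2))
    have h2 : ∀ᶠ j in atTop, C * (L - I (tj j)) < ε / 2 := by
      have : Tendsto (fun j => C * (L - I (tj j))) atTop (nhds (C * (L - L))) :=
        (tendsto_const_nhds.sub hILj).const_mul C
      simp only [sub_self, mul_zero] at this
      exact this.eventually (eventually_lt_nhds (by linarith : (0:ℝ) < ε / 2))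
    have h3 : ∀ᶠ j in atTop, 0 ≤ tj j := htj.eventually (eventually_ge_atTop 0)
    obtain ⟨j, hj1, hj2, hj3⟩ := (h1.and (h2.and h3)).exists
    refine ⟨tj j, fun t ht => ?_⟩
    have ht0 : (0 : ℝ) ≤ t := le_trans hj3 ht
    have hk := key (tj j) t hj3 ht
    have hint' : ∫ u in tj j..t, F u = I t - I (tj j) := by
      rw [hI]
      rw [← intervalIntegral.integral_interval_sub_left]
      · apply (hint.mono_set ?_).intervalIntegrable
        rw [uIcc_of_le ht0]
        exact fun y hy => hy.1
      · apply (hint.mono_set ?_).intervalIntegrable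
        rw [uIcc_of_le hj3]
        exact fun y hy => hy.1
    rw [hint'] at hk
    have hbound : Real.arctan (F t) < ε := by
      have hItL : I t ≤ L := hIle t ht0
      have : C * (I t - I (tj j)) ≤ C * (L - I (tj j)) := by
        apply mul_le_mul_of_nonneg_left _ (le_of_lt hC)
        linarith
      linarith
    have hge : 0 ≤ Real.arctan (F t) := by
      have := Real.arctan_strictMono.monotone (hnonneg t ht0)
      rwa [Real.arctan_zero] at this
    rw [Real.dist_eq, sub_zero, abs_of_nonneg hge]
    exact hbound
  -- conclude: F t = tan (arctan (F t))
  have hFeq : F = fun t => Real.tan (Real.arctan (F t)) := by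
    funext t; rw [Real.tan_arctan]
  rw [hFeq]
  have htan : ContinuousAt Real.tan 0 :=
    Real.continuousAt_tan.mpr (by simp [Real.cos_zero])
  have := htan.tendsto.comp harc0
  simpa [Real.tan_zero, Function.comp_def] using this
end

section
/- Let E : H → ℝ be a continuous quadratic-type functional on a normed space and C_b ⊂ H constraint sets indexed by b > 0 of the form C_b = {φ : A(φ) + b·B(φ) = 1} where A, B : H → [0,∞) are continuous and positively 2-homogeneous (A(μφ) = μ²A(φ)). Define Y(b) = inf{E(φ) : φ ∈ C_b}, assumed finite and negative, with the property that minimizing sequences are bounded. Then b ↦ Y(b) is continuous: for b_m → b, |Y(b_m) - Y(b)| → 0. -/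
open Filter

theorem stmt_15 {H : Type*} [NormedAddCommGroup H] [NormedSpace ℝ H]
    (E A B : H → ℝ)
    (hEcont : Continuous E) (hAcont : Continuous A) (hBcont : Continuous B)
    (hA0 : ∀ φ, 0 ≤ A φ) (hB0 : ∀ φ, 0 ≤ B φ)
    (hEhom : ∀ (μ : ℝ), 0 < μ → ∀ φ, E (μ • φ) = μ ^ 2 * E φ)
    (hAhom : ∀ (μ : ℝ), 0 < μ → ∀ φ, A (μ • φ) = μ ^ 2 * A φ)
    (hBhom : ∀ (μ : ℝ), 0 < μ → ∀ φ, B (μ • φ) = μ ^ 2 * B φ)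
    (hpos : ∀ b > (0 : ℝ), ∀ φ : H, φ ≠ 0 → 0 < A φ + b * B φ)
    (Y : ℝ → ℝ)
    (hY : ∀ b > (0 : ℝ), IsGLB {y : ℝ | ∃ φ : H, A φ + b * B φ = 1 ∧ E φ = y} (Y b))
    (hYneg : ∀ b > (0 : ℝ), Y b < 0)
    (hbdd : ∀ b > (0 : ℝ), ∃ M : ℝ, ∀ φ : H,
      A φ + b * B φ = 1 → E φ ≤ Y b + 1 → ‖φ‖ ≤ M ∧ B φ ≤ M) :
    ∀ b > (0 : ℝ), ∀ bm : ℕ → ℝ, (∀ m, 0 < bm m) →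
      Tendsto bm atTop (nhds b) → Tendsto (fun m => Y (bm m)) atTop (nhds (Y b)) := by
  intro b hb bm hbm hlim
  -- Key comparison lemma: Y c ≤ Y c' / (1 + |c - c'| / c')
  have key : ∀ c > (0:ℝ), ∀ c' > (0:ℝ), Y c ≤ Y c' / (1 + |c - c'| / c') := by
    intro c hc c' hc'
    set r := |c - c'| / c' with hrdef
    have hr0 : 0 ≤ r := div_nonneg (abs_nonneg _) hc'.le
    have h1r : (0:ℝ) < 1 + r := by linarith
    refine le_of_forall_pos_le_add ?_
    intro ε hε
    have hYc' := hYneg c' hc'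
    set ε' := min ε (-(Y c')/2) with hε'def
    have hε'0 : 0 < ε' := lt_min hε (by linarith)
    have hε'ε : ε' ≤ ε := min_le_left _ _
    have hε'Y : ε' ≤ -(Y c')/2 := min_le_right _ _
    obtain ⟨y, hymem, _, hyu⟩ :=
      (hY c' hc').exists_between (by linarith : Y c' < Y c' + ε')
    obtain ⟨φ, hφC, hφE⟩ := hymem
    have hEφ : E φ < Y c' + ε' := hφE ▸ hyu
    have hEφneg : E φ < 0 := by linarith
    have hφ0 : φ ≠ 0 := by
      intro h
      rw [h] at hφC
      have hA00 : A 0 = 0 := by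
        have h2 := hAhom 2 (by norm_num) 0
        rw [smul_zero] at h2; linarith
      have hB00 : B 0 = 0 := by
        have h2 := hBhom 2 (by norm_num) 0
        rw [smul_zero] at h2; linarith
      rw [hA00, hB00] at hφC; linarith
    set t := A φ + c * B φ with htdef
    have ht0 : 0 < t := hpos c hc φ hφ0
    have hBle : B φ ≤ 1 / c' := by
      rw [le_div_iff₀ hc']
      have := hA0 φ
      nlinarith [hφC]
    have htle : t ≤ 1 + r := by
      have h1 : t = 1 + (c - c') * B φ := by rw [htdef]; linarith [hφC]
      have h2 : (c - c') * B φ ≤ |c - c'| * B φ :=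
        mul_le_mul_of_nonneg_right (le_abs_self _) (hB0 φ)
      have h3 : |c - c'| * B φ ≤ |c - c'| * (1 / c') :=
        mul_le_mul_of_nonneg_left hBle (abs_nonneg _)
      have h4 : |c - c'| * (1 / c') = r := by rw [hrdef]; ring
      linarith
    set μ := (Real.sqrt t)⁻¹ with hμdef
    have hμ0 : 0 < μ := inv_pos.2 (Real.sqrt_pos.2 ht0)
    have hμ2 : μ ^ 2 = t⁻¹ := by
      rw [hμdef, inv_pow, Real.sq_sqrt ht0.le]
    have hmem : A (μ • φ) + c * B (μ • φ) = 1 := by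
      rw [hAhom μ hμ0, hBhom μ hμ0, hμ2]
      field_simp
      exact htdef.symm
    have hYle : Y c ≤ E (μ • φ) :=
      (hY c hc).1 ⟨μ • φ, hmem, rfl⟩
    have hEval : E (μ • φ) = E φ / t := by
      rw [hEhom μ hμ0, hμ2, inv_mul_eq_div]
    have hstep1 : E φ / t ≤ E φ / (1 + r) := by
      rw [div_le_div_iff₀ ht0 h1r]
      nlinarith [mul_le_mul_of_nonpos_left htle hEφneg.le]
    have hstep2 : E φ / (1 + r) ≤ (Y c' + ε') / (1 + r) :=
      by gcongr
    have hstep3 : (Y c' + ε') / (1 + r) ≤ Y c' / (1 + r) + ε := by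
      have : (Y c' + ε') / (1 + r) = Y c' / (1 + r) + ε' / (1 + r) := by ring
      rw [this]
      have : ε' / (1 + r) ≤ ε' := by
        rw [div_le_iff₀ h1r]; nlinarith
      linarith
    calc Y c ≤ E (μ • φ) := hYle
      _ = E φ / t := hEval
      _ ≤ E φ / (1 + r) := hstep1
      _ ≤ (Y c' + ε') / (1 + r) := hstep2
      _ ≤ Y c' / (1 + r) + ε := hstep3
  -- Squeeze
  have hlow : ∀ m, Y b * (1 + |b - bm m| / bm m) ≤ Y (bm m) := by
    intro m
    have h := key b hb (bm m) (hbm m)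
    have h1r : (0:ℝ) < 1 + |b - bm m| / bm m := by
      have : 0 ≤ |b - bm m| / bm m := div_nonneg (abs_nonneg _) (hbm m).le
      linarith
    rwa [le_div_iff₀ h1r] at h
  have hupp : ∀ m, Y (bm m) ≤ Y b / (1 + |bm m - b| / b) := fun m =>
    key (bm m) (hbm m) b hb
  have hr_lim : Tendsto (fun m => |b - bm m| / bm m) atTop (nhds 0) := by
    have h1 : Tendsto (fun m => |b - bm m|) atTop (nhds 0) := by
      have := ((tendsto_const_nhds (x := b)).sub hlim).abs
      simpa using this
    have := h1.div hlim hb.ne'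
    simpa [Pi.div_def] using this
  have hs_lim : Tendsto (fun m => |bm m - b| / b) atTop (nhds 0) := by
    have h1 : Tendsto (fun m => |bm m - b|) atTop (nhds 0) := by
      have := (hlim.sub (tendsto_const_nhds (x := b))).abs
      simpa using this
    have := h1.div (tendsto_const_nhds (x := b)) hb.ne'
    simpa [Pi.div_def] using this
  have hlow_lim : Tendsto (fun m => Y b * (1 + |b - bm m| / bm m)) atTop (nhds (Y b)) := by
    have := ((tendsto_const_nhds (x := (1:ℝ))).add hr_lim).const_mul (Y b)
    simpa using this
  have hupp_lim : Tendsto (fun m => Y b / (1 + |bm m - b| / b)) atTop (nhds (Y b)) := by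
    have h1 : Tendsto (fun m => (1:ℝ) + |bm m - b| / b) atTop (nhds 1) := by
      have := (tendsto_const_nhds (x := (1:ℝ))).add hs_lim
      simpa using this
    have := (tendsto_const_nhds (x := Y b)).div h1 (one_ne_zero)
    simpa [Pi.div_def] using this
  exact tendsto_of_tendsto_of_tendsto_of_le_of_le hlow_lim hupp_lim hlow hupp
end
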